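/- Let p be a prime with p ≡ 3 (mod 4), q = p³, and for u ∈ (ℤ/qℤ)² and ρ ∈ ℤ/qℤ, let C_ρ(u) := {v ∈ (ℤ/qℤ)² : ‖v − u‖ = ρ} where ‖(x,y)‖ := x² + y². Then |C_ρ(u)| = p² if ρ = 0; |C_ρ(u)| = p³ + p² if ρ ∈ p²·(ℤ/qℤ)^× or ρ is a unit; and |C_ρ(u)| = 0 if ρ ∈ p·(ℤ/qℤ)^× (i.e., p ∣ ρ but p² ∤ ρ). -/

import Mathlib

open Finset

namespace CCC

open scoped Classical

variable {p : ℕ} [hpf : Fact p.Prime]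

lemma neg_one_not_sq (hp4 : p % 4 = 3) : ¬ IsSquare (-1 : ZMod p) := by
  rw [ZMod.exists_sq_eq_neg_one_iff]; simp [hp4]

lemma modp_sq_add_sq_eq_zero (hp4 : p % 4 = 3) {x y : ZMod p} (h : x ^ 2 + y ^ 2 = 0) :
    x = 0 ∧ y = 0 := by
  have hx : x = 0 := by
    by_contra hx
    apply neg_one_not_sq hp4
    refine ⟨y * x⁻¹, ?_⟩
    have h2 : y ^ 2 = -x ^ 2 := by linear_combination h
    field_simp
    linear_combination -h
  refine ⟨hx, ?_⟩
  subst hx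
  simpa [pow_eq_zero_iff] using h

lemma dvd_iff_val_dvd {n m : ℕ} [NeZero n] (hmn : m ∣ n) (x : ZMod n) :
    (m : ZMod n) ∣ x ↔ m ∣ x.val := by
  constructor
  · rintro ⟨c, hc⟩
    have : x = ((m * c.val : ℕ) : ZMod n) := by
      push_cast [ZMod.natCast_val, ZMod.cast_id]; exact hc
    have hval : x.val = (m * c.val) % n := by rw [this, ZMod.val_natCast]
    rw [hval]
    exact Nat.dvd_mod_iff hmn |>.mpr ⟨c.val, rfl⟩
  · rintro ⟨t, ht⟩
    refine ⟨(t : ZMod n), ?_⟩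
    have : x = ((m * t : ℕ) : ZMod n) := by
      rw [← ht, ZMod.natCast_val, ZMod.cast_id]
    rw [this]; push_cast; ring

lemma card_multiples (a b : ℕ) [NeZero a] [NeZero b] :
    ((univ : Finset (ZMod (a * b))).filter fun x => (a : ZMod (a * b)) ∣ x).card = b := by
  have ha : 0 < a := Nat.pos_of_ne_zero (NeZero.ne a)
  have key : (univ : Finset (ZMod b)).card =
      ((univ : Finset (ZMod (a * b))).filter fun x => (a : ZMod (a * b)) ∣ x).card := by
    apply Finset.card_bij (fun (c : ZMod b) _ => ((a * c.val : ℕ) : ZMod (a * b))) ?_ ?_ ?_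
    · intro c _
      simp only [mem_filter, mem_univ, true_and]
      exact ⟨(c.val : ZMod (a*b)), by push_cast; ring⟩
    · intro c _ c' _ h
      have hlt : a * c.val < a * b := by
        exact (Nat.mul_lt_mul_left ha).mpr (ZMod.val_lt c)
      have hlt' : a * c'.val < a * b := by
        exact (Nat.mul_lt_mul_left ha).mpr (ZMod.val_lt c')
      have := congrArg ZMod.val h
      rw [ZMod.val_natCast_of_lt hlt, ZMod.val_natCast_of_lt hlt'] at this
      have : c.val = c'.val := Nat.eq_of_mul_eq_mul_left ha this
      exact ZMod.val_injective _ this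
    · intro x hx
      simp only [mem_filter, mem_univ, true_and] at hx
      rw [dvd_iff_val_dvd ⟨b, rfl⟩] at hx
      obtain ⟨t, ht⟩ := hx
      have htb : t < b := by
        have := ZMod.val_lt x
        rw [ht] at this
        exact Nat.lt_of_mul_lt_mul_left this
      refine ⟨(t : ZMod b), mem_univ _, ?_⟩
      show ((a * (t : ZMod b).val : ℕ) : ZMod (a * b)) = x
      rw [ZMod.val_natCast_of_lt htb, ← ht, ZMod.natCast_val, ZMod.cast_id]
  rw [← key, card_univ, ZMod.card]

noncomputable def r {p : ℕ} : ZMod (p ^ 3) →+* ZMod p :=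
  ZMod.castHom (dvd_pow_self p three_ne_zero) (ZMod p)

lemma r_apply (x : ZMod (p ^ 3)) : r x = ((x.val : ℕ) : ZMod p) := by
  rw [r, ZMod.castHom_apply, ← ZMod.natCast_val]

lemma p_dvd_iff (x : ZMod (p ^ 3)) :
    (p : ZMod (p ^ 3)) ∣ x ↔ ((x.val : ZMod p) = 0) := by
  rw [dvd_iff_val_dvd (dvd_pow_self p three_ne_zero), ZMod.natCast_eq_zero_iff]

lemma p_dvd_iff' (x : ZMod (p ^ 3)) :
    (p : ZMod (p ^ 3)) ∣ x ↔ r x = 0 := by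
  rw [p_dvd_iff, r_apply]

/-- key: p divides x²+y² in ZMod p³ implies p ∣ x and p ∣ y -/
lemma p_dvd_of_dvd_norm (hp4 : p % 4 = 3) {x y : ZMod (p ^ 3)}
    (h : (p : ZMod (p ^ 3)) ∣ x ^ 2 + y ^ 2) :
    (p : ZMod (p ^ 3)) ∣ x ∧ (p : ZMod (p ^ 3)) ∣ y := by
  rw [p_dvd_iff' x, p_dvd_iff' y]
  apply modp_sq_add_sq_eq_zero hp4 (x := r x) (y := r y)
  obtain ⟨c, hc⟩ := h
  have : r (x ^ 2 + y ^ 2) = r ((p : ZMod (p^3)) * c) := by rw [hc]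
  simpa [map_add, map_pow, map_mul, map_natCast, ZMod.natCast_self] using this

lemma psq_mul_eq_zero_iff (z : ZMod (p ^ 3)) :
    (p : ZMod (p ^ 3)) ^ 2 * z = 0 ↔ (p : ZMod (p ^ 3)) ∣ z := by
  have hz : (p : ZMod (p^3)) ^ 2 * z = ((p ^ 2 * z.val : ℕ) : ZMod (p^3)) := by
    push_cast [ZMod.natCast_val, ZMod.cast_id]; ring
  rw [hz, ZMod.natCast_eq_zero_iff, dvd_iff_val_dvd (dvd_pow_self p three_ne_zero)]
  generalize z.val = t
  rw [pow_succ, Nat.mul_dvd_mul_iff_left (pow_pos hpf.out.pos 2)]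

lemma isUnit_iff_not_p_dvd (x : ZMod (p ^ 3)) :
    IsUnit x ↔ ¬ (p : ZMod (p ^ 3)) ∣ x := by
  rw [dvd_iff_val_dvd (dvd_pow_self p three_ne_zero)]
  conv_lhs => rw [show x = ((x.val : ℕ) : ZMod (p^3)) by rw [ZMod.natCast_val, ZMod.cast_id]]
  rw [ZMod.isUnit_iff_coprime, Nat.coprime_pow_right_iff (by norm_num : 0 < 3),
    Nat.coprime_comm, Nat.Prime.coprime_iff_not_dvd hpf.out]

/-- Hensel step for square roots, in ℤ -/
lemma int_sqrt_step (hp2 : p ≠ 2) (k : ℕ) (a x : ℤ) (hx : ¬ (p : ℤ) ∣ x)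
    (h : (p : ℤ) ^ (k + 1) ∣ x ^ 2 - a) :
    ∃ y : ℤ, ¬ (p : ℤ) ∣ y ∧ (p : ℤ) ^ (k + 2) ∣ y ^ 2 - a := by
  obtain ⟨c, hc⟩ := h
  have h2x : ((2 * x : ℤ) : ZMod p) ≠ 0 := by
    rw [Ne, ZMod.intCast_zmod_eq_zero_iff_dvd]
    intro hd
    rcases (Int.Prime.dvd_mul' (by exact_mod_cast hpf.out) hd) with h2 | hx'
    · have hpd2 : p ∣ 2 := by exact_mod_cast h2
      exact hp2 ((Nat.prime_dvd_prime_iff_eq hpf.out Nat.prime_two).mp hpd2)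
    · exact hx hx'
  set w : ZMod p := ((2 * x : ℤ) : ZMod p)⁻¹ with hw
  set u : ℤ := (w.val : ℤ) with hu
  have hinv : ((2 * x * u - 1 : ℤ) : ZMod p) = 0 := by
    have h1 : ((2 * x * u - 1 : ℤ) : ZMod p) = ((2 * x : ℤ) : ZMod p) * ((u : ℤ) : ZMod p) - 1 := by
      push_cast; ring
    have h2 : ((u : ℤ) : ZMod p) = w := by
      rw [hu]; push_cast [ZMod.natCast_val, ZMod.cast_id]; rfl
    rw [h1, h2, hw, mul_inv_cancel₀ h2x, sub_self]
  rw [ZMod.intCast_zmod_eq_zero_iff_dvd] at hinv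
  obtain ⟨d, hd⟩ := hinv
  refine ⟨x - (p:ℤ) ^ (k+1) * c * u, ?_, ?_⟩
  · intro hdvd
    apply hx
    have : (p:ℤ) ∣ (p:ℤ) ^ (k+1) * c * u := ⟨(p:ℤ)^k * c * u, by ring⟩
    have := dvd_add hdvd this
    simpa using this
  · refine ⟨-(c * d) + (p:ℤ) ^ k * c ^ 2 * u ^ 2, ?_⟩
    linear_combination hc + (-(p:ℤ)^(k+1)*c) * hd

/-- existence of square roots in ZMod p³ for elements that are squares of units mod p -/
lemma exists_sqrt (hp2 : p ≠ 2) (z : ZMod (p ^ 3)) (t : ZMod p) (ht : t ≠ 0)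
    (hz : r z = t ^ 2) : ∃ a : ZMod (p ^ 3), a ^ 2 = z := by
  have hxt' : ((t.val : ℕ) : ZMod p) = t := by
    rw [ZMod.natCast_val, ZMod.cast_id]
  have hxt : ((t.val : ℤ) : ZMod p) = t := by push_cast; exact hxt'
  have hcast : ((z.val : ℕ) : ZMod p) = t ^ 2 := (r_apply z).symm.trans hz
  have hpx : ¬ (p : ℤ) ∣ (t.val : ℤ) := by
    rw [← ZMod.intCast_zmod_eq_zero_iff_dvd, hxt]; exact ht
  have h1 : (p : ℤ) ^ (0 + 1) ∣ (t.val : ℤ) ^ 2 - (z.val : ℤ) := by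
    rw [zero_add, pow_one, ← ZMod.intCast_zmod_eq_zero_iff_dvd]
    push_cast
    rw [hxt', hcast, sub_self]
  obtain ⟨y1, hy1, hdvd1⟩ := int_sqrt_step hp2 0 _ _ hpx h1
  obtain ⟨y2, hy2, hdvd2⟩ := int_sqrt_step hp2 1 _ _ hy1 hdvd1
  refine ⟨((y2 : ℤ) : ZMod (p ^ 3)), ?_⟩
  have h0 : ((y2 ^ 2 - (z.val : ℤ) : ℤ) : ZMod (p ^ 3)) = 0 := by
    rw [ZMod.intCast_zmod_eq_zero_iff_dvd]
    have : ((p : ℤ)) ^ 3 = ((p ^ 3 : ℕ) : ℤ) := by push_cast; ring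
    rw [← this]
    exact hdvd2
  push_cast at h0
  rw [ZMod.natCast_val, ZMod.cast_id] at h0
  linear_combination h0

lemma rep_aux (hp2 : p ≠ 2) (e : ZMod (p ^ 3)) (a₀ b₀ : ZMod p) (ha : a₀ ≠ 0)
    (h : a₀ ^ 2 + b₀ ^ 2 = r e) : ∃ a b : ZMod (p ^ 3), a ^ 2 + b ^ 2 = e := by
  set b : ZMod (p ^ 3) := ((b₀.val : ℕ) : ZMod (p ^ 3)) with hb
  have hrb : r b = b₀ := by
    rw [hb, map_natCast, ZMod.natCast_val, ZMod.cast_id]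
  have hz : r (e - b ^ 2) = a₀ ^ 2 := by
    rw [map_sub, map_pow, hrb]; linear_combination -h
  obtain ⟨a, ha2⟩ := exists_sqrt hp2 (e - b ^ 2) a₀ ha hz
  exact ⟨a, b, by linear_combination ha2⟩

lemma unit_sum_two_squares (hp4 : p % 4 = 3) (e : ZMod (p ^ 3)) (he : IsUnit e) :
    ∃ a b : ZMod (p ^ 3), a ^ 2 + b ^ 2 = e := by
  have hp2 : p ≠ 2 := by intro h; rw [h] at hp4; norm_num at hp4
  obtain ⟨a₀, b₀, hab⟩ := ZMod.sq_add_sq p (r e)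
  have hre : r e ≠ 0 := fun h0 =>
    (isUnit_iff_not_p_dvd e).mp he ((p_dvd_iff' e).mpr h0)
  rcases eq_or_ne a₀ 0 with h0 | h0
  · have hb0 : b₀ ≠ 0 := by
      intro hb0; apply hre; rw [← hab, h0, hb0]; ring
    exact rep_aux hp2 e b₀ a₀ hb0 (by linear_combination hab)
  · exact rep_aux hp2 e a₀ b₀ h0 hab

/-- the number of points on the circle of radius σ -/
def Nf (p : ℕ) [hpf : Fact p.Prime] (σ : ZMod (p ^ 3)) : ℕ :=
  ((univ : Finset (ZMod (p ^ 3) × ZMod (p ^ 3))).filter fun v => v.1 ^ 2 + v.2 ^ 2 = σ).card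

lemma Nf_mul_unit (hp4 : p % 4 = 3) (ρ e : ZMod (p ^ 3)) (he : IsUnit e) :
    Nf p ρ = Nf p (e * ρ) := by
  obtain ⟨a, b, hab⟩ := unit_sum_two_squares hp4 e he
  obtain ⟨E, hE⟩ := he
  set g : ZMod (p ^ 3) := ((E⁻¹ : (ZMod (p ^ 3))ˣ) : ZMod (p ^ 3)) with hgdef
  have hg : g * e = 1 := by rw [hgdef, ← hE]; exact E.inv_mul
  apply Finset.card_bij (fun (v : ZMod (p ^ 3) × ZMod (p ^ 3)) _ =>
    (a * v.1 - b * v.2, b * v.1 + a * v.2))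
  · intro v hv
    simp only [mem_filter, mem_univ, true_and] at hv ⊢
    linear_combination (v.1 ^ 2 + v.2 ^ 2) * hab + e * hv
  · intro v _ v' _ h
    rw [Prod.mk.injEq] at h
    obtain ⟨h1, h2⟩ := h
    have e1 : e * v.1 = e * v'.1 := by linear_combination a * h1 + b * h2 + (v'.1 - v.1) * hab
    have e2 : e * v.2 = e * v'.2 := by linear_combination a * h2 - b * h1 + (v'.2 - v.2) * hab
    have hu : IsUnit e := ⟨E, hE⟩
    exact Prod.ext (hu.mul_left_cancel e1) (hu.mul_left_cancel e2)
  · intro w hw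
    simp only [mem_filter, mem_univ, true_and] at hw
    refine ⟨(g * (a * w.1 + b * w.2), g * (a * w.2 - b * w.1)), ?_, ?_⟩
    · simp only [mem_filter, mem_univ, true_and]
      linear_combination (g ^ 2 * (w.1 ^ 2 + w.2 ^ 2)) * hab + (g ^ 2 * e) * hw +
        (ρ * (g * e + 1)) * hg
    · rw [Prod.mk.injEq]
      constructor
      · linear_combination (g * w.1) * hab + w.1 * hg
      · linear_combination (g * w.2) * hab + w.2 * hg

lemma pcube_eq_zero : ((p : ZMod (p ^ 3))) ^ 3 = 0 := by
  have : ((p : ZMod (p ^ 3))) ^ 3 = ((p ^ 3 : ℕ) : ZMod (p ^ 3)) := by push_cast; ring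
  rw [this, ZMod.natCast_self]

lemma norm_eq_zero_iff (hp4 : p % 4 = 3) (x y : ZMod (p ^ 3)) :
    x ^ 2 + y ^ 2 = 0 ↔ ((p : ZMod (p ^ 3)) ^ 2 ∣ x ∧ (p : ZMod (p ^ 3)) ^ 2 ∣ y) := by
  constructor
  · intro h
    obtain ⟨hx, hy⟩ := p_dvd_of_dvd_norm hp4 (h ▸ dvd_zero _)
    obtain ⟨a, ha⟩ := hx
    obtain ⟨b, hb⟩ := hy
    have hz : (p : ZMod (p ^ 3)) ^ 2 * (a ^ 2 + b ^ 2) = 0 := by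
      rw [ha, hb] at h; linear_combination h
    obtain ⟨ha2, hb2⟩ := p_dvd_of_dvd_norm hp4 ((psq_mul_eq_zero_iff _).mp hz)
    obtain ⟨a', ha'⟩ := ha2
    obtain ⟨b', hb'⟩ := hb2
    exact ⟨⟨a', by rw [ha, ha']; ring⟩, ⟨b', by rw [hb, hb']; ring⟩⟩
  · rintro ⟨⟨a, rfl⟩, ⟨b, rfl⟩⟩
    have h3 : ((p : ZMod (p ^ 3))) ^ 3 = 0 := pcube_eq_zero
    linear_combination ((p : ZMod (p^3)) * (a^2 + b^2)) * h3

lemma card_filter_prod (P Q : ZMod (p ^ 3) → Prop) [DecidablePred P] [DecidablePred Q] :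
    ((univ : Finset (ZMod (p ^ 3) × ZMod (p ^ 3))).filter fun v => P v.1 ∧ Q v.2).card =
      (univ.filter P).card * (univ.filter Q).card := by
  rw [← Finset.univ_product_univ, Finset.filter_product, Finset.card_product]

lemma card_multiples' (a b n : ℕ) [NeZero a] [NeZero b] [NeZero n] (hn : n = a * b) :
    ((univ : Finset (ZMod n)).filter fun x => (a : ZMod n) ∣ x).card = b := by
  subst hn; exact card_multiples a b

lemma card_mult_pow (j : ℕ) (hj : j ≤ 3) :
    ((univ : Finset (ZMod (p ^ 3))).filter fun x => ((p : ZMod (p ^ 3)) ^ j) ∣ x).card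
      = p ^ (3 - j) := by
  have h : p ^ 3 = p ^ j * p ^ (3 - j) := by
    rw [← pow_add, Nat.add_sub_cancel' hj]
  have hcast : (((p ^ j : ℕ)) : ZMod (p ^ 3)) = (p : ZMod (p ^ 3)) ^ j := by
    push_cast; ring
  have hfe : ((univ : Finset (ZMod (p ^ 3))).filter fun x => ((p : ZMod (p ^ 3)) ^ j) ∣ x)
      = (univ.filter fun x => ((p ^ j : ℕ) : ZMod (p ^ 3)) ∣ x) := by
    apply Finset.filter_congr; intro x _; rw [hcast]
  rw [hfe, card_multiples' (p ^ j) (p ^ (3 - j)) _ h]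

lemma Nf_zero (hp4 : p % 4 = 3) : Nf p 0 = p ^ 2 := by
  have hset : ((univ : Finset (ZMod (p ^ 3) × ZMod (p ^ 3))).filter
      fun v => v.1 ^ 2 + v.2 ^ 2 = (0 : ZMod (p ^ 3))) =
      (univ.filter fun v => ((p : ZMod (p ^ 3)) ^ 2 ∣ v.1 ∧ (p : ZMod (p ^ 3)) ^ 2 ∣ v.2)) := by
    apply Finset.filter_congr
    intro v _
    simp only [norm_eq_zero_iff hp4]
  rw [Nf, hset, card_filter_prod, card_mult_pow 2 (by norm_num)]
  ring

lemma psq_dvd_norm {x y : ZMod (p ^ 3)} (hx : (p : ZMod (p ^ 3)) ∣ x)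
    (hy : (p : ZMod (p ^ 3)) ∣ y) : (p : ZMod (p ^ 3)) ^ 2 ∣ x ^ 2 + y ^ 2 := by
  obtain ⟨a, rfl⟩ := hx; obtain ⟨b, rfl⟩ := hy; exact ⟨a ^ 2 + b ^ 2, by ring⟩

lemma Nf_p_unit_zero (hp4 : p % 4 = 3) (σ : ZMod (p ^ 3)) (h1 : (p : ZMod (p ^ 3)) ∣ σ)
    (h2 : ¬ (p : ZMod (p ^ 3)) ^ 2 ∣ σ) : Nf p σ = 0 := by
  rw [Nf, Finset.card_eq_zero, Finset.filter_eq_empty_iff]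
  intro v _ hv
  apply h2
  obtain ⟨hx, hy⟩ := p_dvd_of_dvd_norm hp4 (hv ▸ h1)
  exact hv ▸ psq_dvd_norm hx hy

lemma card_mult_one :
    ((univ : Finset (ZMod (p ^ 3))).filter fun x => (p : ZMod (p ^ 3)) ∣ x).card = p ^ 2 := by
  have h := card_mult_pow (p := p) 1 (by norm_num)
  have hfe : ((univ : Finset (ZMod (p ^ 3))).filter fun x => ((p : ZMod (p ^ 3)) ^ 1) ∣ x)
      = (univ.filter fun x => (p : ZMod (p ^ 3)) ∣ x) := by
    apply Finset.filter_congr; intro x _; rw [pow_one]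
  rw [← hfe, h]

lemma sum_D2 (hp4 : p % 4 = 3) :
    ∑ σ ∈ (univ : Finset (ZMod (p ^ 3))).filter (fun σ => (p : ZMod (p ^ 3)) ^ 2 ∣ σ),
      Nf p σ = p ^ 4 := by
  classical
  set D2 := (univ : Finset (ZMod (p ^ 3))).filter (fun σ => (p : ZMod (p ^ 3)) ^ 2 ∣ σ) with hD2
  set S := (univ : Finset (ZMod (p ^ 3) × ZMod (p ^ 3))).filter
    (fun v => (p : ZMod (p ^ 3)) ∣ v.1 ∧ (p : ZMod (p ^ 3)) ∣ v.2) with hS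
  have hmap : ∀ v ∈ S, v.1 ^ 2 + v.2 ^ 2 ∈ D2 := by
    intro v hv
    rw [hS, mem_filter] at hv
    rw [hD2, mem_filter]
    exact ⟨mem_univ _, psq_dvd_norm hv.2.1 hv.2.2⟩
  have hsum := Finset.card_eq_sum_card_fiberwise hmap
  have hScard : S.card = p ^ 4 := by
    rw [hS, card_filter_prod, card_mult_one]
    ring
  have hfib : ∀ σ ∈ D2, Nf p σ = (S.filter fun v => v.1 ^ 2 + v.2 ^ 2 = σ).card := by
    intro σ hσ
    rw [hD2, mem_filter] at hσ
    have hps : (p : ZMod (p ^ 3)) ∣ σ := dvd_trans ⟨(p : ZMod (p ^ 3)), (sq _)⟩ hσ.2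
    unfold Nf
    congr 1
    rw [hS, filter_filter]
    symm
    apply Finset.filter_congr
    intro v _
    constructor
    · exact fun h => h.2
    · intro h
      exact ⟨p_dvd_of_dvd_norm hp4 (h ▸ hps), h⟩
  rw [Finset.sum_congr rfl hfib, ← hsum]
  exact hScard

lemma eq_two (hp4 : p % 4 = 3) :
    p ^ 4 = Nf p 0 + (p - 1) * Nf p ((p : ZMod (p ^ 3)) ^ 2) := by
  classical
  set D2 := (univ : Finset (ZMod (p ^ 3))).filter (fun σ => (p : ZMod (p ^ 3)) ^ 2 ∣ σ) with hD2
  have h0 : (0 : ZMod (p ^ 3)) ∈ D2 := by rw [hD2, mem_filter]; exact ⟨mem_univ _, dvd_zero _⟩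
  have hins : D2 = insert 0 (D2.erase 0) := (Finset.insert_erase h0).symm
  have hcardD2 : D2.card = p := by
    rw [hD2]
    have := card_mult_pow (p := p) 2 (by norm_num)
    rw [this]
    norm_num
  have hconst : ∀ σ ∈ D2.erase 0, Nf p σ = Nf p ((p : ZMod (p ^ 3)) ^ 2) := by
    intro σ hσ
    rw [Finset.mem_erase] at hσ
    obtain ⟨hne, hmem⟩ := hσ
    rw [hD2, mem_filter] at hmem
    obtain ⟨c, hc⟩ := hmem.2
    have hcu : IsUnit c := by
      by_contra hnc
      rw [isUnit_iff_not_p_dvd, not_not] at hnc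
      obtain ⟨d, rfl⟩ := hnc
      apply hne
      rw [hc]
      have h3 : ((p : ZMod (p ^ 3))) ^ 3 = 0 := pcube_eq_zero
      linear_combination d * h3
    have := Nf_mul_unit hp4 ((p : ZMod (p ^ 3)) ^ 2) c hcu
    rw [this, hc]
    congr 1
    ring
  have hsum : ∑ σ ∈ D2, Nf p σ = Nf p 0 + (p - 1) * Nf p ((p : ZMod (p ^ 3)) ^ 2) := by
    rw [hins, Finset.sum_insert (Finset.notMem_erase _ _)]
    congr 1
    rw [Finset.sum_congr rfl hconst, Finset.sum_const, Finset.card_erase_of_mem h0, hcardD2,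
      smul_eq_mul]
  rw [← sum_D2 hp4 (p := p), hsum]

lemma Nf_psq (hp4 : p % 4 = 3) : Nf p ((p : ZMod (p ^ 3)) ^ 2) = p ^ 3 + p ^ 2 := by
  have heq := eq_two (p := p) hp4
  rw [Nf_zero hp4] at heq
  obtain ⟨m, hm⟩ : ∃ m, p = m + 1 := ⟨p - 1, (Nat.succ_pred_eq_of_pos hpf.out.pos).symm⟩
  have hid : p ^ 4 = p ^ 2 + (p - 1) * (p ^ 3 + p ^ 2) := by
    subst hm; simp only [Nat.add_sub_cancel]; ring
  have hm1 : 0 < p - 1 := by have := hpf.out.one_lt; omega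
  apply Nat.eq_of_mul_eq_mul_left hm1
  omega

lemma eq_one (hp4 : p % 4 = 3) :
    p ^ 6 = p ^ 4 + ((univ : Finset (ZMod (p ^ 3))).filter
      fun σ => ¬ (p : ZMod (p ^ 3)) ∣ σ).card * Nf p 1 := by
  classical
  have htot := Finset.card_eq_sum_card_fiberwise
    (s := (univ : Finset (ZMod (p ^ 3) × ZMod (p ^ 3)))) (t := univ)
    (f := fun v => v.1 ^ 2 + v.2 ^ 2) (fun v _ => mem_univ _)
  have hcard : (univ : Finset (ZMod (p ^ 3) × ZMod (p ^ 3))).card = p ^ 6 := by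
    rw [card_univ, Fintype.card_prod, ZMod.card]
    ring
  have hNf : ∀ σ ∈ (univ : Finset (ZMod (p ^ 3))),
      ((univ : Finset (ZMod (p ^ 3) × ZMod (p ^ 3))).filter
        fun v => v.1 ^ 2 + v.2 ^ 2 = σ).card = Nf p σ := by
    intro σ _
    unfold Nf
    congr 1
  rw [hcard, Finset.sum_congr rfl hNf] at htot
  rw [← Finset.sum_filter_add_sum_filter_not univ (fun σ => (p : ZMod (p ^ 3)) ∣ σ)] at htot
  have hpart1 : ∑ σ ∈ univ.filter (fun σ => (p : ZMod (p ^ 3)) ∣ σ), Nf p σ = p ^ 4 := by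
    rw [← Finset.sum_filter_add_sum_filter_not
      (univ.filter (fun σ => (p : ZMod (p ^ 3)) ∣ σ)) (fun σ => (p : ZMod (p ^ 3)) ^ 2 ∣ σ)]
    have hA : (univ.filter (fun σ => (p : ZMod (p ^ 3)) ∣ σ)).filter
        (fun σ => (p : ZMod (p ^ 3)) ^ 2 ∣ σ) =
          univ.filter (fun σ => (p : ZMod (p ^ 3)) ^ 2 ∣ σ) := by
      rw [filter_filter]
      apply Finset.filter_congr
      intro σ _
      have : (p : ZMod (p ^ 3)) ^ 2 ∣ σ → (p : ZMod (p ^ 3)) ∣ σ :=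
        fun h => dvd_trans ⟨(p : ZMod (p ^ 3)), (sq _)⟩ h
      tauto
    have hB : ∑ σ ∈ (univ.filter (fun σ => (p : ZMod (p ^ 3)) ∣ σ)).filter
        (fun σ => ¬ (p : ZMod (p ^ 3)) ^ 2 ∣ σ), Nf p σ = 0 := by
      apply Finset.sum_eq_zero
      intro σ hσ
      rw [filter_filter, mem_filter] at hσ
      exact Nf_p_unit_zero hp4 σ hσ.2.1 hσ.2.2
    rw [hA, hB, sum_D2 hp4, add_zero]
  have hpart2 : ∑ σ ∈ univ.filter (fun σ => ¬ (p : ZMod (p ^ 3)) ∣ σ), Nf p σ =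
      ((univ : Finset (ZMod (p ^ 3))).filter fun σ => ¬ (p : ZMod (p ^ 3)) ∣ σ).card
        * Nf p 1 := by
    rw [Finset.sum_congr rfl (fun σ hσ => ?_), Finset.sum_const, smul_eq_mul]
    rw [mem_filter] at hσ
    have hu : IsUnit σ := (isUnit_iff_not_p_dvd σ).mpr hσ.2
    have := Nf_mul_unit hp4 1 σ hu
    rw [mul_one] at this
    exact this.symm
  rw [hpart1, hpart2] at htot
  exact htot

lemma Nf_one (hp4 : p % 4 = 3) : Nf p 1 = p ^ 3 + p ^ 2 := by
  have heq := eq_one (p := p) hp4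
  have hcnot : ((univ : Finset (ZMod (p ^ 3))).filter
      fun σ => ¬ (p : ZMod (p ^ 3)) ∣ σ).card + p ^ 2 = p ^ 3 := by
    classical
    have := Finset.card_filter_add_card_filter_not
      (s := (univ : Finset (ZMod (p ^ 3)))) (p := fun σ => (p : ZMod (p ^ 3)) ∣ σ)
    rw [card_mult_one (p := p), card_univ, ZMod.card] at this
    omega
  obtain ⟨m, hm⟩ : ∃ m, p = m + 1 := ⟨p - 1, (Nat.succ_pred_eq_of_pos hpf.out.pos).symm⟩
  have hpos : 0 < p ^ 3 - p ^ 2 := by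
    have h1 : p ^ 2 < p ^ 3 := by
      apply Nat.pow_lt_pow_right hpf.out.one_lt (by norm_num)
    omega
  have hid : p ^ 6 = p ^ 4 + (p ^ 3 - p ^ 2) * (p ^ 3 + p ^ 2) := by
    have h1 : p ^ 2 ≤ p ^ 3 := Nat.pow_le_pow_right hpf.out.pos (by norm_num)
    subst hm
    have h2 : (m + 1) ^ 3 - (m + 1) ^ 2 = (m + 1) ^ 2 * m := by
      have : (m + 1) ^ 3 = (m + 1) ^ 2 * m + (m + 1) ^ 2 := by ring
      omega
    rw [h2]; ring
  have hcnot' : ((univ : Finset (ZMod (p ^ 3))).filter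
      fun σ => ¬ (p : ZMod (p ^ 3)) ∣ σ).card = p ^ 3 - p ^ 2 := by omega
  rw [hcnot'] at heq
  apply Nat.eq_of_mul_eq_mul_left hpos
  omega

lemma ncard_circle (u : ZMod (p ^ 3) × ZMod (p ^ 3)) (ρ : ZMod (p ^ 3)) :
    {v : ZMod (p ^ 3) × ZMod (p ^ 3) |
      (v.1 - u.1) ^ 2 + (v.2 - u.2) ^ 2 = ρ}.ncard = Nf p ρ := by
  have himg : {v : ZMod (p ^ 3) × ZMod (p ^ 3) | (v.1 - u.1) ^ 2 + (v.2 - u.2) ^ 2 = ρ} =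
      (fun v => v + u) '' {v : ZMod (p ^ 3) × ZMod (p ^ 3) | v.1 ^ 2 + v.2 ^ 2 = ρ} := by
    ext v
    simp only [Set.mem_setOf_eq, Set.mem_image]
    constructor
    · intro h
      exact ⟨v - u, by simpa using h, by simp⟩
    · rintro ⟨w, hw, rfl⟩
      simpa using hw
  rw [himg, Set.ncard_image_of_injective _ (add_left_injective u),
    Set.ncard_eq_toFinset_card']
  rw [Nf]
  congr 1
  ext v
  simp

end CCC

theorem circle_card_mod_p_cubed (p : ℕ) (hp : p.Prime) (hp4 : p % 4 = 3)
    (u : ZMod (p ^ 3) × ZMod (p ^ 3)) (ρ : ZMod (p ^ 3)) :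
    (ρ = 0 →
      {v : ZMod (p ^ 3) × ZMod (p ^ 3) |
        (v.1 - u.1) ^ 2 + (v.2 - u.2) ^ 2 = ρ}.ncard = p ^ 2) ∧
    ((IsUnit ρ ∨ ∃ e : ZMod (p ^ 3), IsUnit e ∧ ρ = (p : ZMod (p ^ 3)) ^ 2 * e) →
      {v : ZMod (p ^ 3) × ZMod (p ^ 3) |
        (v.1 - u.1) ^ 2 + (v.2 - u.2) ^ 2 = ρ}.ncard = p ^ 3 + p ^ 2) ∧
    ((p : ZMod (p ^ 3)) ∣ ρ → ¬ ((p : ZMod (p ^ 3)) ^ 2 ∣ ρ) →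
      {v : ZMod (p ^ 3) × ZMod (p ^ 3) |
        (v.1 - u.1) ^ 2 + (v.2 - u.2) ^ 2 = ρ}.ncard = 0) := by
  haveI : Fact p.Prime := ⟨hp⟩
  rw [CCC.ncard_circle u ρ]
  refine ⟨?_, ?_, ?_⟩
  · rintro rfl
    exact CCC.Nf_zero hp4
  · rintro (hu | ⟨e, he, rfl⟩)
    · have := CCC.Nf_mul_unit hp4 1 ρ hu
      rw [mul_one] at this
      rw [← this]
      exact CCC.Nf_one hp4
    · have h1 := CCC.Nf_mul_unit hp4 ((p : ZMod (p ^ 3)) ^ 2) e he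
      rw [mul_comm] at h1
      rw [← h1]
      exact CCC.Nf_psq hp4
  · intro h1 h2
    exact CCC.Nf_p_unit_zero hp4 ρ h1 h2
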